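/- Let S be a finite set and q : S × S → ℕ with n := ∑_{a,b} q(a,b) ≥ 1. Assume: (balance) for every a ∈ S, ∑_b q(a,b) = ∑_b q(b,a); and (connectivity) for all a, a' ∈ S with ∑_b q(a,b) > 0 and ∑_b q(a',b) > 0, there exist m ≥ 1 and s₁,…,s_m ∈ S with s₁ = a, s_m = a', and q(s_i, s_{i+1}) > 0 for all 1 ≤ i < m. Then there exists a sequence s : ℤ/nℤ → S such that for every pair (a,b) ∈ S × S, the number of t ∈ ℤ/nℤ with s(t) = a and s(t+1) = b is exactly q(a,b). -/

import Mathlib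

open Finset

set_option linter.unusedSectionVars false
section
variable {S : Type*} [Fintype S] [DecidableEq S]

/-- cyclic pair list of a list -/
def cyc (l : List S) : List (S × S) := l.zip (l.rotate 1)

/-- linear pair list of a list -/
def lin (l : List S) : List (S × S) := l.zip l.tail

/-- number of cyclic transitions from `a` to `b` in `l` -/
def pc (l : List S) (a b : S) : ℕ := (cyc l).countP (fun q => q = (a, b))

@[simp] lemma length_cyc (l : List S) : (cyc l).length = l.length := by
  simp [cyc]

lemma rotate_one_cons (a : S) (l : List S) : (a :: l).rotate 1 = l ++ [a] := by
  simpa using List.rotate_cons_succ l a 0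

lemma cyc_append (a b : S) (as bs : List S) :
    cyc ((a :: as) ++ (b :: bs)) =
      (a :: as).zip (as ++ [b]) ++ (b :: bs).zip (bs ++ [a]) := by
  have h1 : ((a :: as) ++ (b :: bs)).rotate 1 = (as ++ [b]) ++ (bs ++ [a]) := by
    rw [List.cons_append, rotate_one_cons]; simp
  rw [cyc, h1, List.zip_append (by simp)]

lemma pc_swap (x y : List S) (a b : S) : pc (x ++ y) a b = pc (y ++ x) a b := by
  cases x with
  | nil => simp
  | cons c cs =>
    cases y with
    | nil => simp
    | cons d ds =>
      unfold pc
      rw [cyc_append, cyc_append]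
      exact List.perm_append_comm.countP_eq _

lemma cyc_split (v : S) (as bs : List S) :
    cyc ((v :: as) ++ (v :: bs)) = cyc (v :: as) ++ cyc (v :: bs) := by
  rw [cyc_append, cyc, rotate_one_cons, cyc, rotate_one_cons]

lemma pc_split (v : S) (as bs : List S) (a b : S) :
    pc ((v :: as) ++ (v :: bs)) a b = pc (v :: as) a b + pc (v :: bs) a b := by
  unfold pc; rw [cyc_split, List.countP_append]

lemma zip_shift : ∀ (as : List S) (a b : S),
    (a :: as).zip (as ++ [b]) = (a :: as).zip as ++ [((a :: as).getLast (by simp), b)]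
  | [], a, b => rfl
  | c :: cs, a, b => by
    have ih := zip_shift cs c b
    have hg : (a :: c :: cs).getLast (by simp) = (c :: cs).getLast (by simp) :=
      List.getLast_cons (by simp)
    simp only [List.cons_append, List.zip_cons_cons] at ih ⊢
    rw [ih, hg]

lemma lin_snoc (a : S) (as : List S) (b : S) :
    lin ((a :: as) ++ [b]) = lin (a :: as) ++ [((a :: as).getLast (by simp), b)] := by
  have h : lin ((a :: as) ++ [b]) = (a :: as).zip (as ++ [b]) := by
    show ((a :: as) ++ [b]).zip (((a :: as) ++ [b]).tail) = _
    have h2 : ((a :: as) ++ [b]).tail = (as ++ [b]) ++ [] := by simp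
    rw [h2, List.zip_append (by simp)]
    simp
  rw [h, zip_shift]; rfl

lemma lin_close (v : S) (t : List S) : lin ((v :: t) ++ [v]) = cyc (v :: t) := by
  show ((v :: t) ++ [v]).zip (((v :: t) ++ [v]).tail) = (v :: t).zip ((v :: t).rotate 1)
  have h1 : ((v :: t) ++ [v]).tail = (t ++ [v]) ++ [] := by simp
  rw [h1, List.zip_append (by simp), rotate_one_cons]
  simp

lemma lin_map_fst : ∀ (l : List S), (lin l).map Prod.fst = l.dropLast
  | [] => rfl
  | [_] => rfl
  | a :: b :: l => by
    have ih := lin_map_fst (b :: l)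
    show (((a, b) :: lin (b :: l)).map Prod.fst) = a :: (b :: l).dropLast
    simp [ih]

lemma lin_map_snd (l : List S) : (lin l).map Prod.snd = l.tail :=
  List.map_snd_zip (by cases l <;> simp)

lemma cyc_map_fst (l : List S) : (cyc l).map Prod.fst = l :=
  List.map_fst_zip (by simp)

lemma cyc_map_snd (l : List S) : (cyc l).map Prod.snd = l.rotate 1 :=
  List.map_snd_zip (by simp)

lemma sum_countP_fst (L : List (S × S)) (a : S) :
    ∑ b, L.countP (fun q => q = (a, b)) = (L.map Prod.fst).countP (fun x => x = a) := by
  induction L with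
  | nil => simp
  | cons x L ih =>
    simp only [List.countP_cons, List.map_cons]
    rw [Finset.sum_add_distrib, ih]
    congr 1
    rcases x with ⟨x1, x2⟩
    by_cases h : x1 = a
    · subst h; simp [Prod.ext_iff, Finset.sum_ite_eq]
    · simp [Prod.ext_iff, h]

lemma sum_countP_snd (L : List (S × S)) (b : S) :
    ∑ a, L.countP (fun q => q = (a, b)) = (L.map Prod.snd).countP (fun x => x = b) := by
  induction L with
  | nil => simp
  | cons x L ih =>
    simp only [List.countP_cons, List.map_cons]
    rw [Finset.sum_add_distrib, ih]
    congr 1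
    rcases x with ⟨x1, x2⟩
    by_cases h : x2 = b
    · subst h; simp [Prod.ext_iff, ite_and, Finset.sum_ite_eq]
    · simp [Prod.ext_iff, h]

lemma sum_sum_countP (L : List (S × S)) :
    ∑ a, ∑ b, L.countP (fun q => q = (a, b)) = L.length := by
  induction L with
  | nil => simp
  | cons x L ih =>
    simp only [List.countP_cons, Finset.sum_add_distrib, ih, List.length_cons]
    congr 1
    rcases x with ⟨x1, x2⟩
    simp [Prod.ext_iff, ite_and, Finset.sum_ite_eq]

lemma countP_eq_card_filter {α : Type*} [DecidableEq α] (L : List α) (x d : α) :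
    L.countP (fun y => y = x) =
      ((Finset.range L.length).filter fun i => L.getD i d = x).card := by
  induction L with
  | nil => simp
  | cons a L ih =>
    rw [Finset.card_filter] at *
    simp only [List.length_cons, Finset.sum_range_succ', List.getD_cons_succ,
      List.getD_cons_zero, List.countP_cons, ih]
    simp [add_comm]

lemma pc_out (l : List S) (a : S) :
    ∑ b, pc l a b = l.countP (fun x => x = a) := by
  unfold pc; rw [sum_countP_fst, cyc_map_fst]

lemma pc_in (l : List S) (a : S) :
    ∑ b, pc l b a = l.countP (fun x => x = a) := by
  unfold pc; rw [sum_countP_snd, cyc_map_snd]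
  exact (l.rotate_perm 1).countP_eq _

lemma pc_len (l : List S) : ∑ a, ∑ b, pc l a b = l.length := by
  unfold pc; rw [sum_sum_countP, length_cyc]

lemma cyc_getD (l : List S) (d : S) (i : ℕ) (hi : i < l.length) :
    (cyc l).getD i (d, d) = (l.getD i d, l.getD ((i + 1) % l.length) d) := by
  have h1 : i < (cyc l).length := by simpa using hi
  have h2 : (i + 1) % l.length < l.length := Nat.mod_lt _ (by omega)
  rw [List.getD_eq_getElem _ _ h1, List.getD_eq_getElem _ _ hi, List.getD_eq_getElem _ _ h2]
  simp only [cyc, List.getElem_zip, List.getElem_rotate]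


lemma greedy_cycle (p : S → S → ℕ) (hbal : ∀ a, ∑ b, p a b = ∑ b, p b a)
    (v : S) (hv : 0 < ∑ b, p v b) :
    ∃ t : List S, ∀ a b : S, pc (v :: t) a b ≤ p a b := by
  classical
  set N := ∑ a, ∑ b, p a b with hN
  set W : List S → Prop :=
    fun t => ∀ a b : S, (lin (v :: t)).countP (fun q => q = (a, b)) ≤ p a b with hW
  have hlinlen : ∀ t : List S, (lin (v :: t)).length = t.length := by
    intro t
    show ((v :: t).zip t).length = t.length
    rw [List.length_zip]; simp
  have hbound : ∀ t : List S, W t → t.length ≤ N := by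
    intro t ht
    have h1 : ∑ a, ∑ b, (lin (v :: t)).countP (fun q => q = (a, b)) = t.length := by
      rw [sum_sum_countP, hlinlen]
    calc t.length = _ := h1.symm
      _ ≤ N := Finset.sum_le_sum fun a _ => Finset.sum_le_sum fun b _ => ht a b
  set P : ℕ → Prop := fun k => ∃ t : List S, t.length = k ∧ W t with hPdef
  have hP0 : P 0 := ⟨[], rfl, fun a b => by show (List.countP _ (lin [v])) ≤ _; simp [lin]⟩
  set K := Nat.findGreatest P N with hK
  obtain ⟨t, htK, htW⟩ : P K := Nat.findGreatest_spec (Nat.zero_le N) hP0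
  have hmax : ∀ t' : List S, W t' → t'.length ≤ K := fun t' h =>
    Nat.le_findGreatest (hbound t' h) ⟨t', rfl, h⟩
  set u := (v :: t).getLast (by simp) with hu
  -- stuck at the end: all out-edges of u are used up
  have hfull : ∀ b, (lin (v :: t)).countP (fun q => q = (u, b)) = p u b := by
    by_contra hc
    push_neg at hc
    obtain ⟨b, hb⟩ := hc
    have hlt : (lin (v :: t)).countP (fun q => q = (u, b)) < p u b :=
      lt_of_le_of_ne (htW u b) hb
    have hW' : W (t ++ [b]) := by
      intro a c
      have he : lin ((v :: t) ++ [b]) = lin (v :: t) ++ [(u, b)] := lin_snoc v t b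
      show (lin ((v :: t) ++ [b])).countP _ ≤ _
      rw [he, List.countP_append]
      by_cases h : (u, b) = (a, c)
      · obtain ⟨rfl, rfl⟩ := Prod.mk.injEq u b a c ▸ h
        simp only [List.countP_cons, List.countP_nil]
        simp
        omega
      · have : (List.countP (fun q => decide (q = (a, c))) [(u, b)]) = 0 := by
          simp [h]
        rw [this]
        simpa using htW a c
    have h2 := hmax (t ++ [b]) hW'
    simp only [List.length_append, List.length_cons, List.length_nil] at h2
    omega
  -- the walk is nontrivial
  have htne : t ≠ [] := by
    intro h
    subst h
    have h1 : ∀ b, p v b = 0 := by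
      intro b
      have := hfull b
      simp only [hu] at this
      simpa [lin] using this.symm
    rw [Finset.sum_congr rfl fun b _ => h1 b] at hv
    simp at hv
  -- the walk returns to v
  have huv : u = v := by
    by_contra hne
    have hout : ∑ b, (lin (v :: t)).countP (fun q => q = (u, b))
        = ((v :: t).dropLast).countP (fun x => x = u) := by
      rw [sum_countP_fst, lin_map_fst]
    have hin : ∑ a, (lin (v :: t)).countP (fun q => q = (a, u))
        = t.countP (fun x => x = u) := by
      rw [sum_countP_snd, lin_map_snd]
      rfl
    have hdrop : (v :: t).dropLast ++ [u] = v :: t := List.dropLast_append_getLast (by simp)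
    have hcount1 : (v :: t).countP (fun x => x = u)
        = ((v :: t).dropLast).countP (fun x => x = u) + 1 := by
      conv_lhs => rw [← hdrop]
      rw [List.countP_append]
      simp
    have hcount2 : (v :: t).countP (fun x => x = u) = t.countP (fun x => x = u) := by
      rw [List.countP_cons]
      simp [Ne.symm hne, hne]
    have hinle : ∑ a, (lin (v :: t)).countP (fun q => q = (a, u)) ≤ ∑ a, p a u :=
      Finset.sum_le_sum fun a _ => htW a u
    have houteq : ∑ b, (lin (v :: t)).countP (fun q => q = (u, b)) = ∑ b, p u b :=
      Finset.sum_congr rfl fun b _ => hfull b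
    have hb2 := hbal u
    omega
  -- close the cycle
  have hgl : t.getLast htne = v := by
    rw [← huv, hu, List.getLast_cons htne]
  have h4 : v :: t = (v :: t.dropLast) ++ [v] := by
    conv_lhs => rw [← List.dropLast_append_getLast htne, hgl]
    rfl
  refine ⟨t.dropLast, fun a b => ?_⟩
  have h5 : cyc (v :: t.dropLast) = lin (v :: t) := by
    rw [← lin_close, ← h4]
  unfold pc
  rw [h5]
  exact htW a b

end


/-- The Eulerian-circuit construction of Markov type classes: if the matrix of
arc multiplicities `q : S × S → ℕ` (with total number of arcs `n ≥ 1`) is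
balanced and its support is connected, then there is a cyclic sequence of `n`
states whose pair-transition counts are exactly `q`. -/
theorem markov_type_nonempty
    {S : Type*} [Fintype S] [DecidableEq S] (q : S → S → ℕ) (n : ℕ)
    (hn : n = ∑ a, ∑ b, q a b) (hn1 : 1 ≤ n)
    (hbal : ∀ a, ∑ b, q a b = ∑ b, q b a)
    (hconn : ∀ a a' : S, 0 < ∑ b, q a b → 0 < ∑ b, q a' b →
      ∃ (m : ℕ) (c : ℕ → S), c 0 = a ∧ c m = a' ∧
        ∀ i < m, 0 < q (c i) (c (i + 1))) :
    ∃ s : ℕ → S, ∀ a b : S,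
      ((Finset.range n).filter fun t => s t = a ∧ s ((t + 1) % n) = b).card
        = q a b := by
  classical
  -- a vertex with positive out-degree
  obtain ⟨a0, ha0⟩ : ∃ a, 0 < ∑ b, q a b := by
    by_contra h
    push_neg at h
    have : n = 0 := by
      rw [hn]
      exact Finset.sum_eq_zero fun a _ => Nat.le_zero.mp (h a)
    omega
  have hbound : ∀ l : List S, (∀ a b, pc l a b ≤ q a b) → l.length ≤ n := by
    intro l hl
    rw [← pc_len l, hn]
    exact Finset.sum_le_sum fun a _ => Finset.sum_le_sum fun b _ => hl a b
  set P : ℕ → Prop := fun k => ∃ l : List S, l.length = k ∧ ∀ a b, pc l a b ≤ q a b with hP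
  obtain ⟨t0, ht0⟩ := greedy_cycle q hbal a0 ha0
  have hseed : P (t0.length + 1) := ⟨a0 :: t0, by simp, ht0⟩
  set K := Nat.findGreatest P n with hK
  have hK1 : t0.length + 1 ≤ K :=
    Nat.le_findGreatest (hbound _ ht0) hseed
  obtain ⟨l, hlK, hlq⟩ : P K := Nat.findGreatest_spec (hbound _ ht0) hseed
  have hlne : l ≠ [] := by
    intro h
    rw [h] at hlK
    simp at hlK
    omega
  -- maximality forces pc l = q
  have hkey : ∀ a b, pc l a b = q a b := by
    by_contra hc
    push_neg at hc
    obtain ⟨A, B, hAB⟩ := hc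
    have hABlt : pc l A B < q A B := lt_of_le_of_ne (hlq A B) hAB
    set q' : S → S → ℕ := fun a b => q a b - pc l a b with hq'
    have hq'bal : ∀ a, ∑ b, q' a b = ∑ b, q' b a := by
      intro a
      show ∑ b, (q a b - pc l a b) = ∑ b, (q b a - pc l b a)
      rw [Finset.sum_tsub_distrib _ (fun b _ => hlq a b),
        Finset.sum_tsub_distrib _ (fun b _ => hlq b a),
        pc_out, pc_in, hbal]
    obtain ⟨h0, l', hl'⟩ := List.exists_cons_of_ne_nil hlne
    have hh0l : h0 ∈ l := by rw [hl']; exact List.mem_cons_self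
    have hout_h0 : 0 < ∑ b, q h0 b := by
      have h1 : 0 < l.countP (fun x => x = h0) :=
        List.countP_pos_iff.mpr ⟨h0, hh0l, by simp⟩
      have h2 := pc_out l h0
      have h3 : ∑ b, pc l h0 b ≤ ∑ b, q h0 b :=
        Finset.sum_le_sum fun b _ => hlq h0 b
      omega
    have hout_A : 0 < ∑ b, q A b :=
      lt_of_lt_of_le (by omega) (Finset.single_le_sum (fun b _ => Nat.zero_le _) (mem_univ B))
    obtain ⟨m, c, hc0, hcm, hstep⟩ := hconn h0 A hout_h0 hout_A
    have hvex : ∃ v ∈ l, 0 < ∑ b, q' v b := by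
      by_contra hno
      push_neg at hno
      have hmem : ∀ i, i ≤ m → c i ∈ l := by
        intro i
        induction i with
        | zero => intro _; rw [hc0]; exact hh0l
        | succ i ih =>
          intro hi
          have hci := ih (by omega)
          have hs0 : ∑ b, q' (c i) b = 0 := Nat.le_zero.mp (hno (c i) hci)
          have hq0 : q' (c i) (c (i + 1)) = 0 :=
            (Finset.sum_eq_zero_iff.mp hs0) _ (mem_univ _)
          have hqpos := hstep i (by omega)
          have hpc : 0 < pc l (c i) (c (i + 1)) := by
            have : q (c i) (c (i+1)) - pc l (c i) (c (i+1)) = 0 := hq0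
            omega
          have hmem2 : (c i, c (i + 1)) ∈ cyc l := by
            obtain ⟨pr, hpr, hpre⟩ := List.countP_pos_iff.mp hpc
            have : pr = (c i, c (i+1)) := by simpa using hpre
            rwa [← this]
          have h6 : c (i + 1) ∈ (cyc l).map Prod.snd := List.mem_map_of_mem hmem2
          rw [cyc_map_snd] at h6
          exact List.mem_rotate.mp h6
      have hAl : A ∈ l := hcm ▸ hmem m le_rfl
      have h7 : ∑ b, q' A b = 0 := Nat.le_zero.mp (hno A hAl)
      have h8 : q' A B = 0 := (Finset.sum_eq_zero_iff.mp h7) _ (mem_univ _)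
      have : q A B - pc l A B = 0 := h8
      omega
    obtain ⟨v, hvl, hvout⟩ := hvex
    obtain ⟨t2, ht2⟩ := greedy_cycle q' hq'bal v hvout
    obtain ⟨x, y, hxy⟩ := List.append_of_mem hvl
    set L : List S := x ++ ((v :: t2) ++ (v :: y)) with hLdef
    have hcount : ∀ a b, pc L a b = pc (v :: t2) a b + pc l a b := by
      intro a b
      calc pc L a b = pc (((v :: t2) ++ (v :: y)) ++ x) a b := pc_swap _ _ _ _
        _ = pc ((v :: t2) ++ ((v :: y) ++ x)) a b := by rw [List.append_assoc]
        _ = pc ((v :: t2) ++ (v :: (y ++ x))) a b := rfl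
        _ = pc (v :: t2) a b + pc (v :: (y ++ x)) a b := pc_split _ _ _ _ _
        _ = pc (v :: t2) a b + pc l a b := by
            congr 1
            calc pc (v :: (y ++ x)) a b = pc ((v :: y) ++ x) a b := rfl
              _ = pc (x ++ (v :: y)) a b := pc_swap _ _ _ _
              _ = pc l a b := by rw [← hxy]
    have hLq : ∀ a b, pc L a b ≤ q a b := by
      intro a b
      have h9 := ht2 a b
      have h10 : q' a b = q a b - pc l a b := rfl
      have h11 := hlq a b
      rw [hcount]
      omega
    have hLlen : L.length = K + t2.length + 1 := by
      have h12 := congrArg List.length hxy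
      have h14 : L.length = x.length + (t2.length + 1 + (y.length + 1)) := by
        rw [hLdef]; simp only [List.length_append, List.length_cons]
      simp only [List.length_append, List.length_cons] at h12
      omega
    have h13 : L.length ≤ K := Nat.le_findGreatest (hbound L hLq) ⟨L, rfl, hLq⟩
    omega
  -- conclusion
  have hlen : l.length = n := by
    have h1 : ∑ a, ∑ b, pc l a b = ∑ a, ∑ b, q a b :=
      Finset.sum_congr rfl fun a _ => Finset.sum_congr rfl fun b _ => hkey a b
    rw [pc_len] at h1
    omega
  set d := l.getLast hlne with hd
  refine ⟨fun t => l.getD t d, fun a b => ?_⟩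
  rw [← hkey a b]
  unfold pc
  rw [countP_eq_card_filter (cyc l) (a, b) (d, d)]
  have hcl : (cyc l).length = n := by rw [length_cyc, hlen]
  rw [hcl]
  congr 1
  apply Finset.filter_congr
  intro i hi
  have hin : i < l.length := by rw [hlen]; exact Finset.mem_range.mp hi
  rw [cyc_getD l d i hin, hlen, Prod.mk.injEq]
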